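/- Let f : ℝ^D → ℝ be differentiable with L-Lipschitz gradient, let x ∈ ℝ^D, let s ∈ (0, 1/L], and let ĝ be a random vector in ℝ^D with E[ĝ] = ḡ and E[‖ĝ − ḡ‖₂²] ≤ v. Then the biased stochastic-gradient step satisfies E[f(x − s·ĝ)] ≤ f(x) − (s/2)·‖∇f(x)‖₂² + (s/2)·‖ḡ − ∇f(x)‖₂² + (L·s²/2)·v. -/

import Mathlib

open MeasureTheory

open RealInnerProductSpace

lemma descent_aux {D : ℕ} (f : EuclideanSpace ℝ (Fin D) → ℝ) (L : ℝ) (hL : 0 ≤ L)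
    (hf : Differentiable ℝ f) (hLip : LipschitzWith L.toNNReal (gradient f))
    (x y : EuclideanSpace ℝ (Fin D)) :
    |f y - f x - ⟪gradient f x, y - x⟫| ≤ L / 2 * ‖y - x‖ ^ 2 := by
  set d := y - x with hd
  have key : ∀ t : ℝ, HasDerivAt (fun t => f (x + t • d)) ⟪gradient f (x + t • d), d⟫ t := by
    intro t
    have h1 : HasDerivAt (fun t : ℝ => x + t • d) d t := by
      simpa using ((hasDerivAt_id t).smul_const d).const_add x
    have h2 := (hasGradientAt_iff_hasFDerivAt.mp (hf (x + t • d)).hasGradientAt)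
    have h3 := h2.comp_hasDerivAt t h1
    rw [InnerProductSpace.toDual_apply_apply] at h3
    exact h3
  have contg : Continuous fun t : ℝ => gradient f (x + t • d) :=
    hLip.continuous.comp (by continuity)
  have cont : Continuous fun t : ℝ => ⟪gradient f (x + t • d), d⟫ :=
    contg.inner continuous_const
  have ftc : ∫ t in (0:ℝ)..1, ⟪gradient f (x + t • d), d⟫ = f (x + (1:ℝ) • d) - f (x + (0:ℝ) • d) :=
    intervalIntegral.integral_eq_sub_of_hasDerivAt (fun t _ => key t) (cont.intervalIntegrable 0 1)
  have hy : x + (1:ℝ) • d = y := by simp [hd]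
  have hx0 : x + (0:ℝ) • d = x := by simp
  rw [hy, hx0] at ftc
  have hconst : ⟪gradient f x, d⟫ = ∫ t in (0:ℝ)..1, ⟪gradient f x, d⟫ := by simp
  have hdiff : f y - f x - ⟪gradient f x, d⟫
      = ∫ t in (0:ℝ)..1, ⟪gradient f (x + t • d) - gradient f x, d⟫ := by
    rw [← ftc, hconst,
      ← intervalIntegral.integral_sub (cont.intervalIntegrable 0 1) intervalIntegrable_const]
    simp [inner_sub_left]
  have hbound : ∀ t ∈ Set.uIcc (0:ℝ) 1,
      |⟪gradient f (x + t • d) - gradient f x, d⟫| ≤ L * t * ‖d‖ ^ 2 := by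
    intro t ht
    rw [Set.uIcc_of_le (by norm_num)] at ht
    have h1 : ‖gradient f (x + t • d) - gradient f x‖ ≤ L * (t * ‖d‖) := by
      have := hLip.dist_le_mul (x + t • d) x
      rw [Real.coe_toNNReal L hL] at this
      simpa [dist_eq_norm, norm_smul, abs_of_nonneg ht.1, mul_assoc] using this
    calc |⟪gradient f (x + t • d) - gradient f x, d⟫|
        ≤ ‖gradient f (x + t • d) - gradient f x‖ * ‖d‖ := abs_real_inner_le_norm _ _
      _ ≤ L * (t * ‖d‖) * ‖d‖ := by
          exact mul_le_mul_of_nonneg_right h1 (norm_nonneg d)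
      _ = L * t * ‖d‖ ^ 2 := by ring
  have habs : |∫ t in (0:ℝ)..1, ⟪gradient f (x + t • d) - gradient f x, d⟫|
      ≤ ∫ t in (0:ℝ)..1, L * t * ‖d‖ ^ 2 := by
    have contd : Continuous fun t : ℝ => ⟪gradient f (x + t • d) - gradient f x, d⟫ :=
      (contg.sub continuous_const).inner continuous_const
    refine (intervalIntegral.abs_integral_le_integral_abs (by norm_num)).trans ?_
    refine intervalIntegral.integral_mono_on (by norm_num)
      (contd.abs.intervalIntegrable 0 1)
      (((continuous_const.mul continuous_id).mul continuous_const).intervalIntegrable 0 1) ?_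
    intro t ht
    exact hbound t (by rw [Set.uIcc_of_le (by norm_num)]; exact ht)
  have hval : ∫ t in (0:ℝ)..1, L * t * ‖d‖ ^ 2 = L / 2 * ‖d‖ ^ 2 := by
    have : (fun t : ℝ => L * t * ‖d‖ ^ 2) = fun t : ℝ => (L * ‖d‖ ^ 2) * t := by
      funext t; ring
    rw [this, intervalIntegral.integral_const_mul, integral_id]
    ring
  rw [hdiff]
  rw [hval] at habs
  exact habs

set_option maxHeartbeats 1000000 in
/-- biased stochastic-gradient descent estimate.  For `f` with
`L`-Lipschitz gradient, step size `s ∈ (0, 1/L]`, and a random direction `ĝ` with mean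
`gbar` and variance at most `v`,
`E[f(x − s·ĝ)] ≤ f(x) − (s/2)‖∇f(x)‖² + (s/2)‖gbar − ∇f(x)‖² + (Ls²/2)·v`. -/
theorem biased_sgd_descent {D : ℕ} (f : EuclideanSpace ℝ (Fin D) → ℝ) (L : ℝ)
    (hf : Differentiable ℝ f) (hLip : LipschitzWith L.toNNReal (gradient f))
    (x : EuclideanSpace ℝ (Fin D)) (s : ℝ) (hs : s ∈ Set.Ioc (0 : ℝ) (1 / L))
    {Ω : Type} [MeasurableSpace Ω] (μ : Measure Ω) [IsProbabilityMeasure μ]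
    (ghat : Ω → EuclideanSpace ℝ (Fin D)) (gbar : EuclideanSpace ℝ (Fin D)) (v : ℝ)
    (hint : Integrable ghat μ) (hsq : Integrable (fun ω => ‖ghat ω - gbar‖ ^ 2) μ)
    (hmean : ∫ ω, ghat ω ∂μ = gbar)
    (hvar : ∫ ω, ‖ghat ω - gbar‖ ^ 2 ∂μ ≤ v) :
    ∫ ω, f (x - s • ghat ω) ∂μ
      ≤ f x - s / 2 * ‖gradient f x‖ ^ 2 + s / 2 * ‖gbar - gradient f x‖ ^ 2
          + L * s ^ 2 / 2 * v := by
  obtain ⟨hs0, hs1⟩ := hs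
  have hL : 0 < L := by
    by_contra h
    push_neg at h
    have : 1 / L ≤ 0 := one_div_nonpos.mpr h
    linarith
  have hsL : s * L ≤ 1 := (le_div_iff₀ hL).mp hs1
  set g0 := gradient f x with hg0
  -- pointwise bounds
  have hpt : ∀ ω, |f (x - s • ghat ω) - f x + s * ⟪g0, ghat ω⟫|
      ≤ L * s ^ 2 / 2 * ‖ghat ω‖ ^ 2 := by
    intro ω
    have h := descent_aux f L hL.le hf hLip x (x - s • ghat ω)
    have he : x - s • ghat ω - x = -(s • ghat ω) := by abel
    rw [he] at h
    have h2 : ⟪g0, -(s • ghat ω)⟫ = -(s * ⟪g0, ghat ω⟫) := by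
      rw [inner_neg_right, real_inner_smul_right]
    have h3 : ‖-(s • ghat ω)‖ ^ 2 = s ^ 2 * ‖ghat ω‖ ^ 2 := by
      rw [norm_neg, norm_smul, mul_pow, Real.norm_eq_abs, sq_abs]
    rw [h2, h3] at h
    calc |f (x - s • ghat ω) - f x + s * ⟪g0, ghat ω⟫|
        = |f (x - s • ghat ω) - f x - (-(s * ⟪g0, ghat ω⟫))| := by ring_nf
      _ ≤ L / 2 * (s ^ 2 * ‖ghat ω‖ ^ 2) := h
      _ = L * s ^ 2 / 2 * ‖ghat ω‖ ^ 2 := by ring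
  -- integrability facts
  have hmeas : AEStronglyMeasurable ghat μ := hint.aestronglyMeasurable
  have hnorm : Integrable (fun ω => ‖ghat ω‖) μ := hint.norm
  have hsq' : Integrable (fun ω => ‖ghat ω‖ ^ 2) μ := by
    refine Integrable.mono' ((hsq.const_mul 2).add (integrable_const (2 * ‖gbar‖ ^ 2))) ?_ ?_
    · exact (hmeas.norm.pow 2)
    · filter_upwards with ω
      have h1 : ‖ghat ω‖ ≤ ‖ghat ω - gbar‖ + ‖gbar‖ := by
        simpa using norm_add_le (ghat ω - gbar) gbar
      have h2 : (0:ℝ) ≤ ‖ghat ω‖ := norm_nonneg _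
      simp only [Pi.add_apply, Real.norm_eq_abs]
      rw [abs_of_nonneg (by positivity)]
      nlinarith [norm_nonneg (ghat ω - gbar), norm_nonneg gbar,
        mul_self_le_mul_self h2 h1, sq_nonneg (‖ghat ω - gbar‖ - ‖gbar‖)]
  have hinner : Integrable (fun ω => ⟪g0, ghat ω⟫) μ := hint.const_inner g0
  have hcomp : Integrable (fun ω => f (x - s • ghat ω)) μ := by
    refine Integrable.mono'
      (g := fun ω => |f x| + s * |⟪g0, ghat ω⟫| + L * s ^ 2 / 2 * ‖ghat ω‖ ^ 2)
      ?_ ?_ ?_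
    · exact ((integrable_const _).add (hinner.abs.const_mul s)).add (hsq'.const_mul _)
    · exact hf.continuous.comp_aestronglyMeasurable
        (aestronglyMeasurable_const.sub (hmeas.const_smul s))
    · filter_upwards with ω
      set A := f (x - s • ghat ω)
      set B := f x
      set C := s * ⟪g0, ghat ω⟫
      have h4 : |A| ≤ |A - B + C| + (|B| + |C|) := by
        calc |A| = |(A - B + C) + (B - C)| := by ring_nf
          _ ≤ |A - B + C| + |B - C| := abs_add_le _ _
          _ ≤ |A - B + C| + (|B| + |C|) := by
              gcongr
              exact (abs_sub _ _)
      have h5 : |C| = s * |⟪g0, ghat ω⟫| := by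
        rw [abs_mul, abs_of_nonneg hs0.le]
      rw [Real.norm_eq_abs]
      have := hpt ω
      rw [h5] at h4
      linarith
  -- integral comparison
  have hrhs : Integrable
      (fun ω => f x - s * ⟪g0, ghat ω⟫ + L * s ^ 2 / 2 * ‖ghat ω‖ ^ 2) μ :=
    ((integrable_const (f x)).sub (hinner.const_mul s)).add (hsq'.const_mul _)
  have hle : ∫ ω, f (x - s • ghat ω) ∂μ
      ≤ ∫ ω, (f x - s * ⟪g0, ghat ω⟫ + L * s ^ 2 / 2 * ‖ghat ω‖ ^ 2) ∂μ := by
    refine integral_mono hcomp hrhs ?_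
    intro ω
    have := hpt ω
    have := abs_le.mp (hpt ω)
    linarith [this.2]
  -- compute RHS integral
  have hI1 : ∫ ω, ⟪g0, ghat ω⟫ ∂μ = ⟪g0, gbar⟫ := by
    rw [← hmean]
    exact integral_inner hint g0
  have hVnn : 0 ≤ ∫ ω, ‖ghat ω - gbar‖ ^ 2 ∂μ :=
    integral_nonneg fun ω => sq_nonneg _
  have hI2 : ∫ ω, ‖ghat ω‖ ^ 2 ∂μ = (∫ ω, ‖ghat ω - gbar‖ ^ 2 ∂μ) + ‖gbar‖ ^ 2 := by
    have hexp : ∀ ω, ‖ghat ω‖ ^ 2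
        = ‖ghat ω - gbar‖ ^ 2 + (2 * ⟪gbar, ghat ω⟫ - ‖gbar‖ ^ 2) := by
      intro ω
      have := norm_sub_sq_real (ghat ω) gbar
      have hc : ⟪ghat ω, gbar⟫ = ⟪gbar, ghat ω⟫ := real_inner_comm _ _
      nlinarith [this]
    have hib : Integrable (fun ω => 2 * ⟪gbar, ghat ω⟫ - ‖gbar‖ ^ 2) μ := by
      exact ((hint.const_inner gbar).const_mul 2).sub (integrable_const _)
    have hib2 : Integrable (fun ω => 2 * ⟪gbar, ghat ω⟫) μ :=
      (hint.const_inner gbar).const_mul 2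
    simp only [hexp]
    rw [integral_add hsq hib, integral_sub hib2 (integrable_const _),
      MeasureTheory.integral_const_mul, integral_inner hint, hmean, integral_const]
    have : ⟪gbar, gbar⟫ = ‖gbar‖ ^ 2 := real_inner_self_eq_norm_sq gbar
    simp [this]
    ring
  have hIrhs : ∫ ω, (f x - s * ⟪g0, ghat ω⟫ + L * s ^ 2 / 2 * ‖ghat ω‖ ^ 2) ∂μ
      = f x - s * ⟪g0, gbar⟫
        + L * s ^ 2 / 2 * ((∫ ω, ‖ghat ω - gbar‖ ^ 2 ∂μ) + ‖gbar‖ ^ 2) := by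
    have ha : Integrable (fun ω => f x - s * ⟪g0, ghat ω⟫) μ :=
      (integrable_const (f x)).sub (hinner.const_mul s)
    have hb : Integrable (fun ω => L * s ^ 2 / 2 * ‖ghat ω‖ ^ 2) μ := hsq'.const_mul _
    have hc : Integrable (fun ω => s * ⟪g0, ghat ω⟫) μ := hinner.const_mul s
    rw [integral_add ha hb, integral_sub (integrable_const (f x)) hc,
      MeasureTheory.integral_const_mul, MeasureTheory.integral_const_mul, hI1, hI2, integral_const]
    simp
  rw [hIrhs] at hle
  -- final arithmetic
  have hid : ‖gbar - g0‖ ^ 2 = ‖gbar‖ ^ 2 - 2 * ⟪g0, gbar⟫ + ‖g0‖ ^ 2 := by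
    have := norm_sub_sq_real gbar g0
    have hc : ⟪gbar, g0⟫ = ⟪g0, gbar⟫ := real_inner_comm _ _
    nlinarith [this]
  have hV := hvar
  nlinarith [hle, sq_nonneg s, mul_pos hs0 hs0, norm_nonneg gbar,
    mul_le_mul_of_nonneg_left hV (by positivity : (0:ℝ) ≤ L * s ^ 2 / 2),
    mul_le_mul_of_nonneg_right hsL (by positivity : (0:ℝ) ≤ s * ‖gbar‖ ^ 2)]
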